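/- Characterization of uniformly continuous functions extendable to the whole space: Let m be a natural number, let A be a nonempty closed subset of ℝᵐ, and let f : A → ℝ be uniformly continuous on A. Then the following are equivalent: (1) f extends to a uniformly continuous function F : ℝᵐ → ℝ; (2) f has a subadditive modulus of continuity ω : [0, ∞) → [0, ∞) (ω(s+t) ≤ ω(s) + ω(t) for s, t ≥ 0, and |f(x) − f(y)| ≤ ω(‖x − y‖) on A) with ω(t) → 0 as t → 0⁺; (3) f has an affine modulus of continuity, i.e. there are reals a, b such that |f(x) − f(y)| ≤ a + b·‖x − y‖ for all x, y ∈ A; (4) f has a concave modulus of continuity ω : [0, ∞) → [0, ∞) with ω(t) → 0 as t → 0⁺. -/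

import Mathlib

section Helpers

open Filter Set

-- concave + nonneg on Ici 0 + tendsto 0 at 0+ ⇒ ω 0 = 0
lemma omega_zero {ω : ℝ → ℝ} (hnn : ∀ t, 0 ≤ t → 0 ≤ ω t)
    (hconc : ConcaveOn ℝ (Set.Ici 0) ω)
    (h0 : Filter.Tendsto ω (nhdsWithin 0 (Set.Ioi 0)) (nhds 0)) : ω 0 = 0 := by
  have key : ∀ t ∈ Set.Ioo (0:ℝ) 1, (1 - t) * ω 0 + t * ω 1 ≤ ω t := by
    intro t ht
    have := hconc.2 (Set.self_mem_Ici) (by norm_num : (1:ℝ) ∈ Set.Ici 0)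
      (by linarith [ht.2] : (0:ℝ) ≤ 1 - t) (le_of_lt ht.1) (by ring)
    simpa [smul_eq_mul] using this
  have hlim : Filter.Tendsto (fun t : ℝ => (1 - t) * ω 0 + t * ω 1)
      (nhdsWithin 0 (Set.Ioi 0)) (nhds (ω 0)) := by
    have hc : Continuous (fun t : ℝ => (1 - t) * ω 0 + t * ω 1) := by continuity
    have := hc.tendsto (0:ℝ)
    simp only [one_mul, sub_zero, zero_mul, add_zero] at this
    exact this.mono_left nhdsWithin_le_nhds
  have hle : ω 0 ≤ 0 := by
    refine le_of_tendsto_of_tendsto hlim h0 ?_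
    filter_upwards [Ioo_mem_nhdsGT_of_mem (by norm_num : (0:ℝ) ∈ Set.Ico 0 1)] with t ht
    exact key t ht
  exact le_antisymm hle (hnn 0 le_rfl)

lemma concave_mono {ω : ℝ → ℝ} (hnn : ∀ t, 0 ≤ t → 0 ≤ ω t)
    (hconc : ConcaveOn ℝ (Set.Ici 0) ω) :
    ∀ s t : ℝ, 0 ≤ s → s ≤ t → ω s ≤ ω t := by
  intro s t hs hst
  rcases eq_or_lt_of_le hst with rfl | hst
  · exact le_rfl
  by_contra hlt
  push_neg at hlt
  set d := ω s - ω t with hd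
  have hd0 : 0 < d := by simp only [hd]; linarith
  set u := max (t + 1) ((t * ω s - s * ω t) / d + 1) with hu
  have hut : t < u := lt_of_lt_of_le (by linarith) (le_max_left _ _)
  have huq : (t * ω s - s * ω t) / d < u := lt_of_lt_of_le (by linarith) (le_max_right _ _)
  have hup : t * ω s - s * ω t < u * d := by
    rw [div_lt_iff₀ hd0] at huq; linarith
  have hsu : 0 < u - s := by linarith
  have hcc : ((u - t) / (u - s)) • ω s + ((t - s) / (u - s)) • ω u
      ≤ ω (((u - t) / (u - s)) • s + ((t - s) / (u - s)) • u) :=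
    hconc.2 (hs : s ∈ Set.Ici 0) (le_of_lt (lt_of_le_of_lt (hs.trans hst.le) hut) : u ∈ Set.Ici 0)
      (le_of_lt (div_pos (by linarith) hsu)) (le_of_lt (div_pos (by linarith) hsu))
      (by field_simp; ring)
  have harg : ((u - t) / (u - s)) • s + ((t - s) / (u - s)) • u = t := by
    simp only [smul_eq_mul]; rw [div_mul_eq_mul_div, div_mul_eq_mul_div, ← add_div, div_eq_iff hsu.ne']; ring
  rw [harg] at hcc
  have hωu : 0 ≤ ω u := hnn u (by linarith)
  simp only [smul_eq_mul] at hcc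
  rw [div_mul_eq_mul_div, div_mul_eq_mul_div, ← add_div, div_le_iff₀ hsu] at hcc
  nlinarith [mul_nonneg (by linarith : (0:ℝ) ≤ t - s) hωu]

lemma concave_subadd {ω : ℝ → ℝ} (hconc : ConcaveOn ℝ (Set.Ici 0) ω) (h0 : ω 0 = 0) :
    ∀ s t : ℝ, 0 ≤ s → 0 ≤ t → ω (s + t) ≤ ω s + ω t := by
  intro s t hs ht
  rcases eq_or_lt_of_le (add_nonneg hs ht) with h | hS
  · have hs0 : s = 0 := by linarith
    have ht0 : t = 0 := by linarith
    simp [hs0, ht0, h0]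
  set S := s + t with hSdef
  have h1 : (s / S) * ω S + (t / S) * ω 0 ≤ ω s := by
    have := hconc.2 (le_of_lt hS : S ∈ Set.Ici 0) (Set.self_mem_Ici)
      (div_nonneg hs hS.le) (div_nonneg ht hS.le) (by field_simp; try linarith)
    have harg : (s / S) • S + (t / S) • (0:ℝ) = s := by
      simp only [smul_eq_mul, mul_zero, add_zero]; field_simp
    rw [harg] at this; simpa [smul_eq_mul] using this
  have h2 : (t / S) * ω S + (s / S) * ω 0 ≤ ω t := by
    have := hconc.2 (le_of_lt hS : S ∈ Set.Ici 0) (Set.self_mem_Ici)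
      (div_nonneg ht hS.le) (div_nonneg hs hS.le) (by field_simp; try linarith)
    have harg : (t / S) • S + (s / S) • (0:ℝ) = t := by
      simp only [smul_eq_mul, mul_zero, add_zero]; field_simp
    rw [harg] at this; simpa [smul_eq_mul] using this
  rw [h0] at h1 h2
  have hsum : s / S + t / S = 1 := by field_simp; try linarith
  have h3 : (s / S) * ω S + (t / S) * ω S = ω S := by rw [← add_mul, hsum, one_mul]
  linarith

lemma uc_affine_modulus {E : Type*} [NormedAddCommGroup E] [NormedSpace ℝ E]
    (F : E → ℝ) (hF : UniformContinuous F) :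
    ∃ a b : ℝ, ∀ x y : E, |F x - F y| ≤ a + b * ‖x - y‖ := by
  obtain ⟨δ, hδ, hδ1⟩ := Metric.uniformContinuous_iff.mp hF 1 one_pos
  refine ⟨1, 2 / δ, fun x y => ?_⟩
  rcases eq_or_ne x y with rfl | hxy
  · simp only [sub_self, abs_zero, norm_zero, mul_zero, add_zero]
    norm_num
  have ht : 0 < ‖x - y‖ := norm_sub_pos_iff.mpr hxy
  set t := ‖x - y‖ with htdef
  set n : ℕ := ⌊t / (δ / 2)⌋₊ + 1 with hn
  have hn0 : 0 < (n : ℝ) := by positivity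
  have hstep : t / n ≤ δ / 2 := by
    rw [div_le_iff₀ hn0]
    have : t / (δ / 2) ≤ (n : ℝ) := by
      rw [hn]; push_cast
      exact (Nat.lt_floor_add_one _).le
    calc t = (t / (δ / 2)) * (δ / 2) := by field_simp
    _ ≤ (n : ℝ) * (δ / 2) := by
      apply mul_le_mul_of_nonneg_right this (by linarith)
    _ = δ / 2 * n := by ring
  have hnle : (n : ℝ) ≤ 2 / δ * t + 1 := by
    rw [hn]; push_cast
    have := Nat.floor_le (by positivity : 0 ≤ t / (δ / 2))
    have h2 : t / (δ / 2) = 2 / δ * t := by field_simp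
    linarith
  set g : ℕ → E := fun i => x + ((i : ℝ) / n) • (y - x) with hg
  have hgstep : ∀ i : ℕ, ‖g (i + 1) - g i‖ < δ := by
    intro i
    have : g (i + 1) - g i = ((1 : ℝ) / n) • (y - x) := by
      simp only [hg]
      rw [add_sub_add_left_eq_sub, ← sub_smul]
      congr 1
      push_cast; field_simp; ring
    rw [this, norm_smul]
    have h1 : ‖(1:ℝ) / n‖ = 1 / n := by
      rw [Real.norm_eq_abs, abs_of_nonneg (by positivity)]
    have h2 : ‖y - x‖ = t := by rw [htdef, norm_sub_rev]
    rw [h1, h2, one_div, inv_mul_eq_div]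
    linarith [hstep]
  have key : ∀ i : ℕ, |F (g i) - F (g 0)| ≤ i := by
    intro i
    induction i with
    | zero => simp
    | succ k ih =>
      have h1 : |F (g (k + 1)) - F (g k)| ≤ 1 := by
        have := hδ1 (a := g (k+1)) (b := g k) (by rw [dist_eq_norm]; exact hgstep k)
        rw [Real.dist_eq] at this
        exact this.le
      calc |F (g (k+1)) - F (g 0)| ≤ |F (g (k+1)) - F (g k)| + |F (g k) - F (g 0)| := by
            have := abs_sub_le (F (g (k+1))) (F (g k)) (F (g 0)); linarith
      _ ≤ 1 + k := by linarith
      _ = ((k + 1 : ℕ) : ℝ) := by push_cast; ring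
  have hgn : g n = y := by
    simp only [hg]
    rw [div_self (ne_of_gt hn0), one_smul]
    abel
  have hg0 : g 0 = x := by simp [hg]
  have := key n
  rw [hgn, hg0, abs_sub_comm] at this
  calc |F x - F y| ≤ (n : ℝ) := this
  _ ≤ 2 / δ * t + 1 := hnle
  _ = 1 + 2 / δ * ‖x - y‖ := by rw [← htdef]; ring

lemma affine_to_concave {E : Type*} [NormedAddCommGroup E] [NormedSpace ℝ E]
    {A : Set E} (hA : A.Nonempty) (f : E → ℝ) (hf : UniformContinuousOn f A)
    {a b : ℝ} (hab : ∀ x ∈ A, ∀ y ∈ A, |f x - f y| ≤ a + b * ‖x - y‖) :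
    ∃ ω : ℝ → ℝ, (∀ t, 0 ≤ t → 0 ≤ ω t) ∧ ConcaveOn ℝ (Set.Ici 0) ω ∧
      (∀ x ∈ A, ∀ y ∈ A, |f x - f y| ≤ ω ‖x - y‖) ∧
      Filter.Tendsto ω (nhdsWithin 0 (Set.Ioi 0)) (nhds 0) := by
  obtain ⟨x₀, hx₀⟩ := hA
  have ha : 0 ≤ a := by
    have := hab x₀ hx₀ x₀ hx₀
    simp at this
    linarith
  set b' := max b 0 with hb'
  have hb'0 : 0 ≤ b' := le_max_right _ _
  have hab' : ∀ x ∈ A, ∀ y ∈ A, |f x - f y| ≤ a + b' * ‖x - y‖ := by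
    intro x hx y hy
    have := hab x hx y hy
    have h2 : b * ‖x - y‖ ≤ b' * ‖x - y‖ :=
      mul_le_mul_of_nonneg_right (le_max_left _ _) (norm_nonneg _)
    linarith
  -- choose δ n for ε = 1/(n+1)
  have hchoice : ∀ n : ℕ, ∃ δ : ℝ, 0 < δ ∧ ∀ x ∈ A, ∀ y ∈ A, dist x y < δ →
      |f x - f y| < 1 / (n + 1) := by
    intro n
    obtain ⟨δ, hδ, h⟩ := Metric.uniformContinuousOn_iff.mp hf (1 / (n + 1)) (by positivity)
    exact ⟨δ, hδ, fun x hx y hy hd => by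
      have := h x hx y hy hd
      rwa [Real.dist_eq] at this⟩
  choose δ hδpos hδ using hchoice
  set c : ℕ → ℝ := fun n => a / δ n + b' with hc
  have hc0 : ∀ n, 0 ≤ c n := fun n => add_nonneg (div_nonneg ha (hδpos n).le) hb'0
  set ω : ℝ → ℝ := fun t => ⨅ n : ℕ, (1 / (n + 1) + c n * t) with hω
  -- each affine function bounds |f x - f y|
  have hmod : ∀ x ∈ A, ∀ y ∈ A, ∀ n : ℕ, |f x - f y| ≤ 1 / (n + 1) + c n * ‖x - y‖ := by
    intro x hx y hy n
    rcases lt_or_ge ‖x - y‖ (δ n) with h | h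
    · have := hδ n x hx y hy (by rwa [dist_eq_norm])
      have h2 : 0 ≤ c n * ‖x - y‖ := mul_nonneg (hc0 n) (norm_nonneg _)
      exact le_trans this.le (le_add_of_nonneg_right h2)
    · have h1 := hab' x hx y hy
      have h2 : a ≤ a / δ n * ‖x - y‖ := by
        rw [div_mul_eq_mul_div, le_div_iff₀ (hδpos n)]
        exact mul_le_mul_of_nonneg_left h ha
      have h3 : (0:ℝ) < 1 / (n + 1) := by positivity
      have : c n * ‖x - y‖ = a / δ n * ‖x - y‖ + b' * ‖x - y‖ := by rw [hc]; ring
      linarith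
  -- bddBelow for nonneg t
  have hbdd : ∀ t : ℝ, 0 ≤ t → BddBelow (Set.range fun n : ℕ => 1 / (n + 1 : ℝ) + c n * t) := by
    intro t ht
    refine ⟨0, fun z hz => ?_⟩
    obtain ⟨n, rfl⟩ := hz
    have : 0 ≤ c n * t := mul_nonneg (hc0 n) ht
    positivity
  have hnn : ∀ t, 0 ≤ t → 0 ≤ ω t := by
    intro t ht
    refine le_ciInf fun n => ?_
    have : 0 ≤ c n * t := mul_nonneg (hc0 n) ht
    positivity
  refine ⟨ω, hnn, ?_, ?_, ?_⟩
  · refine ⟨convex_Ici 0, ?_⟩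
    intro x hx y hy p q hp hq hpq
    simp only [smul_eq_mul]
    have harg : ω (p * x + q * y) = ⨅ n : ℕ, (1 / (n + 1) + c n * (p * x + q * y)) := rfl
    rw [harg]
    refine le_ciInf fun n => ?_
    have h1 : ω x ≤ 1 / (n + 1) + c n * x := ciInf_le (hbdd x hx) n
    have h2 : ω y ≤ 1 / (n + 1) + c n * y := ciInf_le (hbdd y hy) n
    have e : 1 / ((n:ℝ) + 1) + c n * (p * x + q * y)
        = p * (1 / (n + 1) + c n * x) + q * (1 / (n + 1) + c n * y) := by
      have : p + q = 1 := hpq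
      field_simp
      nlinarith [this]
    rw [e]
    exact add_le_add (mul_le_mul_of_nonneg_left h1 hp) (mul_le_mul_of_nonneg_left h2 hq)
  · intro x hx y hy
    exact le_ciInf fun n => hmod x hx y hy n
  · rw [Metric.tendsto_nhdsWithin_nhds]
    intro ε hε
    obtain ⟨n, hn⟩ := exists_nat_one_div_lt (half_pos hε)
    refine ⟨ε / 2 / (c n + 1), div_pos (half_pos hε) (by linarith [hc0 n]), fun t ht hd => ?_⟩
    have ht0 : 0 < t := ht
    rw [Real.dist_eq, sub_zero] at hd ⊢
    rw [abs_of_nonneg (hnn t ht0.le)]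
    have h1 : ω t ≤ 1 / (n + 1) + c n * t := ciInf_le (hbdd t ht0.le) n
    have h2 : |t| = t := abs_of_pos ht0
    rw [h2] at hd
    have h3 : c n * t ≤ (c n + 1) * t := by nlinarith [hc0 n]
    have h4 : (c n + 1) * t < ε / 2 := by
      have := mul_lt_mul_of_pos_left hd (by linarith [hc0 n] : (0:ℝ) < c n + 1)
      calc (c n + 1) * t < (c n + 1) * (ε / 2 / (c n + 1)) := this
      _ = ε / 2 := by rw [mul_comm, div_mul_cancel₀ _ (by linarith [hc0 n] : (0:ℝ) < c n + 1).ne']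
    calc ω t ≤ 1 / (n + 1) + c n * t := h1
    _ < ε / 2 + ε / 2 := by push_cast; push_cast at hn; linarith
    _ = ε := by ring




lemma concave_extend {E : Type*} [NormedAddCommGroup E] [NormedSpace ℝ E]
    {A : Set E} (hA : A.Nonempty) (f : E → ℝ)
    {ω : ℝ → ℝ} (hnn : ∀ t, 0 ≤ t → 0 ≤ ω t) (hconc : ConcaveOn ℝ (Set.Ici 0) ω)
    (hmod : ∀ x ∈ A, ∀ y ∈ A, |f x - f y| ≤ ω ‖x - y‖)
    (h0 : Filter.Tendsto ω (nhdsWithin 0 (Set.Ioi 0)) (nhds 0)) :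
    ∃ F : E → ℝ, UniformContinuous F ∧ ∀ x ∈ A, F x = f x := by
  obtain ⟨x₀, hx₀⟩ := hA
  have hω0 : ω 0 = 0 := omega_zero hnn hconc h0
  have hmono := concave_mono hnn hconc
  have hsub := concave_subadd hconc hω0
  -- key: ω ‖u - w‖ ≤ ω ‖v - w‖ + ω ‖u - v‖
  have htri : ∀ u v w : E, ω ‖u - w‖ ≤ ω ‖v - w‖ + ω ‖u - v‖ := by
    intro u v w
    calc ω ‖u - w‖ ≤ ω (‖v - w‖ + ‖u - v‖) := by
          apply hmono _ _ (norm_nonneg _)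
          calc ‖u - w‖ = ‖(u - v) + (v - w)‖ := by abel_nf
          _ ≤ ‖u - v‖ + ‖v - w‖ := norm_add_le _ _
          _ = ‖v - w‖ + ‖u - v‖ := by ring
    _ ≤ ω ‖v - w‖ + ω ‖u - v‖ := hsub _ _ (norm_nonneg _) (norm_nonneg _)
  haveI : Nonempty A := ⟨⟨x₀, hx₀⟩⟩
  set F : E → ℝ := fun x => ⨅ y : A, (f y + ω ‖x - (y : E)‖) with hF
  have hbdd : ∀ x : E, BddBelow (Set.range fun y : A => f y + ω ‖x - (y : E)‖) := by
    intro x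
    refine ⟨f x₀ - ω ‖x₀ - x‖, fun z hz => ?_⟩
    obtain ⟨y, rfl⟩ := hz
    have h1 : f x₀ - f y ≤ ω ‖x₀ - (y : E)‖ :=
      (abs_le.mp (hmod x₀ hx₀ y y.2)).2 |>.trans_eq' rfl
    have h2 : ω ‖x₀ - (y : E)‖ ≤ ω ‖x - (y : E)‖ + ω ‖x₀ - x‖ := htri x₀ x y
    show f x₀ - ω ‖x₀ - x‖ ≤ f (y : E) + ω ‖x - (y : E)‖
    linarith
  have hkey : ∀ x x' : E, F x ≤ F x' + ω ‖x - x'‖ := by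
    intro x x'
    rw [hF]
    have : (⨅ y : A, (f y + ω ‖x' - (y : E)‖)) + ω ‖x - x'‖
        = ⨅ y : A, ((f y + ω ‖x' - (y : E)‖) + ω ‖x - x'‖) := by
      exact ciInf_add (hbdd x') _
    rw [this]
    refine le_ciInf fun y => ?_
    have h1 : F x ≤ f y + ω ‖x - (y : E)‖ := ciInf_le (hbdd x) y
    have h2 : ω ‖x - (y : E)‖ ≤ ω ‖x' - (y : E)‖ + ω ‖x - x'‖ := htri x x' y
    simp only [hF] at h1
    linarith
  have heq : ∀ x ∈ A, F x = f x := by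
    intro x hx
    apply le_antisymm
    · have := ciInf_le (hbdd x) ⟨x, hx⟩
      simpa [sub_self, hω0] using this
    · refine le_ciInf fun y => ?_
      have := (abs_le.mp (hmod x hx y y.2)).2
      linarith
  refine ⟨F, ?_, heq⟩
  rw [Metric.uniformContinuous_iff]
  intro ε hε
  rw [Metric.tendsto_nhdsWithin_nhds] at h0
  obtain ⟨δ, hδ, hδε⟩ := h0 ε hε
  refine ⟨δ, hδ, fun {x x'} hd => ?_⟩
  rcases eq_or_ne x x' with rfl | hne
  · simpa using hε
  have ht : 0 < ‖x - x'‖ := norm_sub_pos_iff.mpr hne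
  have habs : |F x - F x'| ≤ ω ‖x - x'‖ := by
    rw [abs_sub_le_iff]
    constructor
    · linarith [hkey x x']
    · have := hkey x' x
      rw [norm_sub_rev] at this
      linarith
  have hd' : dist ‖x - x'‖ 0 < δ := by
    rw [Real.dist_eq, sub_zero, abs_of_pos ht]
    rwa [dist_eq_norm] at hd
  have := hδε ht hd'
  rw [Real.dist_eq, sub_zero, abs_of_nonneg (hnn _ (norm_nonneg _))] at this
  rw [Real.dist_eq]
  exact lt_of_le_of_lt habs this

lemma subadd_to_affine {ω : ℝ → ℝ} (hnn : ∀ t, 0 ≤ t → 0 ≤ ω t)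
    (hsub : ∀ s t : ℝ, 0 ≤ s → 0 ≤ t → ω (s + t) ≤ ω s + ω t)
    (h0 : Filter.Tendsto ω (nhdsWithin 0 (Set.Ioi 0)) (nhds 0)) :
    ∃ a b : ℝ, ∀ t : ℝ, 0 < t → ω t ≤ a + b * t := by
  rw [Metric.tendsto_nhdsWithin_nhds] at h0
  obtain ⟨δ, hδ, hδ1⟩ := h0 1 one_pos
  set d := δ / 2 with hd
  have hd0 : 0 < d := by positivity
  have hsmall : ∀ t : ℝ, 0 < t → t ≤ d → ω t ≤ 1 := by
    intro t ht htd
    have h1 := hδ1 (x := t) ht (by rw [Real.dist_eq, sub_zero, abs_of_pos ht]; linarith)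
    rw [Real.dist_eq, sub_zero, abs_of_nonneg (hnn t ht.le)] at h1
    exact h1.le
  have key : ∀ n : ℕ, ∀ t : ℝ, 0 < t → t ≤ n * d → ω t ≤ 1 + t / d := by
    intro n
    induction n with
    | zero => intro t ht htn; simp at htn; linarith
    | succ k ih =>
      intro t ht htn
      rcases le_or_gt t d with h | h
      · have := hsmall t ht h
        have : 0 ≤ t / d := by positivity
        linarith [hsmall t ht h]
      · have h1 : 0 < t - d := by linarith
        have h2 : t - d ≤ k * d := by push_cast at htn ⊢; linarith
        have h3 := ih (t - d) h1 h2
        have h4 : ω t ≤ ω (t - d) + ω d := by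
          have := hsub (t - d) d h1.le hd0.le
          rwa [sub_add_cancel] at this
        have h5 := hsmall d hd0 le_rfl
        have h6 : (t - d) / d = t / d - 1 := by field_simp
        rw [h6] at h3
        linarith
  refine ⟨1, 1 / d, fun t ht => ?_⟩
  have hn : t ≤ (⌈t / d⌉₊ : ℝ) * d := by
    rw [← div_le_iff₀ hd0]
    exact Nat.le_ceil _
  have := key ⌈t / d⌉₊ t ht hn
  rw [one_div, inv_mul_eq_div] at *
  linarith
end Helpers


/-- Characterization of uniformly continuous functions `f : A → ℝ` (`A ⊆ ℝᵐ` closed,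
nonempty) extendable to a uniformly continuous function on all of `ℝᵐ`: this holds iff
`f` has a subadditive modulus of continuity vanishing at `0⁺`, iff `f` has an affine
modulus of continuity, iff `f` has a concave modulus of continuity vanishing at `0⁺`. -/
theorem uniformly_continuous_extension_tfae (m : ℕ)
    (A : Set (EuclideanSpace ℝ (Fin m))) (hA : A.Nonempty) (hAclosed : IsClosed A)
    (f : EuclideanSpace ℝ (Fin m) → ℝ) (hf : UniformContinuousOn f A) :
    List.TFAE [
      -- (1) f extends to a uniformly continuous function on ℝᵐ
      ∃ F : EuclideanSpace ℝ (Fin m) → ℝ, UniformContinuous F ∧ ∀ x ∈ A, F x = f x,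
      -- (2) f has a subadditive modulus of continuity vanishing at 0⁺
      ∃ ω : ℝ → ℝ, (∀ t, 0 ≤ t → 0 ≤ ω t) ∧
        (∀ s t : ℝ, 0 ≤ s → 0 ≤ t → ω (s + t) ≤ ω s + ω t) ∧
        (∀ x ∈ A, ∀ y ∈ A, |f x - f y| ≤ ω ‖x - y‖) ∧
        Filter.Tendsto ω (nhdsWithin 0 (Set.Ioi 0)) (nhds 0),
      -- (3) f has an affine modulus of continuity
      ∃ a b : ℝ, ∀ x ∈ A, ∀ y ∈ A, |f x - f y| ≤ a + b * ‖x - y‖,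
      -- (4) f has a concave modulus of continuity vanishing at 0⁺
      ∃ ω : ℝ → ℝ, (∀ t, 0 ≤ t → 0 ≤ ω t) ∧ ConcaveOn ℝ (Set.Ici 0) ω ∧
        (∀ x ∈ A, ∀ y ∈ A, |f x - f y| ≤ ω ‖x - y‖) ∧
        Filter.Tendsto ω (nhdsWithin 0 (Set.Ioi 0)) (nhds 0)
    ] := by
  tfae_have 1 → 3 := by
    rintro ⟨F, hFuc, hFA⟩
    obtain ⟨a, b, hab⟩ := uc_affine_modulus F hFuc
    exact ⟨a, b, fun x hx y hy => by rw [← hFA x hx, ← hFA y hy]; exact hab x y⟩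
  tfae_have 3 → 4 := by
    rintro ⟨a, b, hab⟩
    exact affine_to_concave hA f hf hab
  tfae_have 4 → 1 := by
    rintro ⟨ω, hnn, hconc, hmod, h0⟩
    exact concave_extend hA f hnn hconc hmod h0
  tfae_have 4 → 2 := by
    rintro ⟨ω, hnn, hconc, hmod, h0⟩
    exact ⟨ω, hnn, concave_subadd hconc (omega_zero hnn hconc h0), hmod, h0⟩
  tfae_have 2 → 3 := by
    rintro ⟨ω, hnn, hsub, hmod, h0⟩
    obtain ⟨a, b, hab⟩ := subadd_to_affine hnn hsub h0
    refine ⟨max a 0, b, fun x hx y hy => ?_⟩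
    rcases eq_or_ne x y with rfl | hne
    · simp only [sub_self, abs_zero, norm_zero, mul_zero, add_zero]
      exact le_max_right _ _
    · have ht : 0 < ‖x - y‖ := norm_sub_pos_iff.mpr hne
      have h1 := hmod x hx y hy
      have h2 := hab ‖x - y‖ ht
      have h3 : a ≤ max a 0 := le_max_left _ _
      linarith
  tfae_finish
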